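/- Let 0 < q < 1, let ν be a positive integer, let z > 0 be real and let n be an integer with 1 ≤ n ≤ ν. Then, as the real non-integer variable s tends to n, the quantity (s − n)·(1−q)^s·Σ_{l=0}^∞ ((s)_l/l!)·q^{z(s−ν+l)}/(1 − q^{s−ν+l}) converges to −C(ν−1, ν−n)·(1−q)^n/log q. (This expresses that the meromorphic continuation of ζ_q^{(ν)}(s,z) has a simple pole at s = n with residue −C(ν−1,ν−n)·(1−q)^n/log q.) -/

import Mathlib

open Complex Filter

/-- `q^w := exp(w · log q)` with the real logarithm of `q`. -/
noncomputable def qpow (q : ℝ) (w : ℂ) : ℂ := Complex.exp (w * Real.log q)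


lemma ascPochhammer_eval_nonneg' {l : ℕ} {s : ℝ} (h0 : 0 ≤ s) :
    0 ≤ (ascPochhammer ℝ l).eval s := by
  rcases eq_or_lt_of_le h0 with h | h
  · rw [← h, ascPochhammer_eval_zero]; positivity
  · exact (ascPochhammer_pos l s h).le

lemma ascPochhammer_eval_le_of_le' {l : ℕ} {s t : ℝ} (h0 : 0 ≤ s) (hst : s ≤ t) :
    (ascPochhammer ℝ l).eval s ≤ (ascPochhammer ℝ l).eval t := by
  induction l with
  | zero => simp
  | succ m ih =>
    rw [ascPochhammer_succ_eval, ascPochhammer_succ_eval]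
    have h1 : (0:ℝ) ≤ (ascPochhammer ℝ m).eval s := ascPochhammer_eval_nonneg' h0
    have h2 : (0:ℝ) ≤ s + m := by positivity
    exact mul_le_mul ih (by linarith) h2 (h1.trans ih)


lemma key_limit {c : ℝ} (hc : c ≠ 0) :
    Tendsto (fun t : ℝ => t / (1 - Real.exp (t * c))) (nhdsWithin 0 {0}ᶜ) (nhds (-c⁻¹)) := by
  have h1 : HasDerivAt (fun t : ℝ => 1 - Real.exp (t * c)) (-c) 0 := by
    have h2 : HasDerivAt (fun t : ℝ => t * c) c 0 := hasDerivAt_mul_const c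
    have h3 := (Real.hasDerivAt_exp (0 * c)).comp 0 h2
    have h5 := (hasDerivAt_const (0:ℝ) (1:ℝ)).sub h3
    simp only [zero_mul, Real.exp_zero, one_mul, zero_sub] at h5
    exact h5
  have h4 := hasDerivAt_iff_tendsto_slope.mp h1
  have h5 : Tendsto (fun t : ℝ => (1 - Real.exp (t * c)) / t) (nhdsWithin 0 {0}ᶜ)
      (nhds (-c)) := by
    apply h4.congr
    intro t
    rw [slope_def_field]
    simp [div_eq_mul_inv]
  have h6 := h5.inv₀ (by simpa using hc)
  have h7 : -c⁻¹ = (-c)⁻¹ := by rw [neg_inv]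
  rw [h7]
  apply h6.congr
  intro t
  rw [inv_div]

set_option maxHeartbeats 2000000 in
lemma real_main (q : ℝ) (hq0 : 0 < q) (hq1 : q < 1) (ν : ℕ) (hν : 0 < ν)
    (z : ℝ) (hz : 0 < z) (n : ℕ) (hn1 : 1 ≤ n) (hn2 : n ≤ ν) :
    Tendsto (fun s : ℝ =>
        (s - n) * (Real.exp (s * Real.log (1 - q)) *
          ∑' l : ℕ, ((ascPochhammer ℝ l).eval s / (Nat.factorial l : ℝ)) *
            q ^ (z * (s - ν + l)) / (1 - q ^ (s - ν + l))))
      (nhdsWithin ((n : ℝ)) {s : ℝ | ∀ k : ℤ, s ≠ (k : ℝ)})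
      (nhds (-(((ν - 1).choose (ν - n) : ℕ) : ℝ) * (1 - q) ^ n / Real.log q)) := by
  have h1q : (0:ℝ) < 1 - q := by linarith
  set c : ℝ := Real.log q with hc_def
  have hc : c < 0 := Real.log_neg hq0 hq1
  set l₀ : ℕ := ν - n with hl₀_def
  have hl₀ : ((l₀ : ℕ) : ℝ) = (ν : ℝ) - (n : ℝ) := by
    rw [hl₀_def, Nat.cast_sub hn2]
  set δ : ℝ := min (1 - q ^ ((1:ℝ)/2)) (q ^ (-(1:ℝ)/2) - 1) with hδ_def
  have hδ : 0 < δ := by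
    apply lt_min
    · have : q ^ ((1:ℝ)/2) < 1 := Real.rpow_lt_one hq0.le hq1 (by norm_num)
      linarith
    · have : (1:ℝ) < q ^ (-(1:ℝ)/2) := by
        rw [Real.one_lt_rpow_iff_of_pos hq0]; right; exact ⟨hq1, by norm_num⟩
      linarith
  have hdenom : ∀ x : ℝ, 1/2 ≤ |x| → δ ≤ |1 - q ^ x| := by
    intro x hx
    rcases le_or_gt (1/2 : ℝ) x with hx2 | hx2
    · have h1 : q ^ x ≤ q ^ ((1:ℝ)/2) := Real.rpow_le_rpow_of_exponent_ge hq0 hq1.le hx2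
      have h2 : q ^ ((1:ℝ)/2) < 1 := Real.rpow_lt_one hq0.le hq1 (by norm_num)
      rw [_root_.abs_of_pos (by linarith)]
      exact le_trans (min_le_left _ _) (by linarith)
    · have hx3 : x ≤ -(1/2) := by
        rcases abs_cases x with ⟨h, _⟩ | ⟨h, _⟩ <;> linarith
      have h1 : q ^ (-(1:ℝ)/2) ≤ q ^ x := Real.rpow_le_rpow_of_exponent_ge hq0 hq1.le (by linarith)
      have h2 : (1:ℝ) < q ^ (-(1:ℝ)/2) := by
        rw [Real.one_lt_rpow_iff_of_pos hq0]; right; exact ⟨hq1, by norm_num⟩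
      rw [_root_.abs_of_neg (by linarith), neg_sub]
      exact le_trans (min_le_right _ _) (by linarith)
  set r : ℝ := q ^ z with hr_def
  have hr0 : 0 < r := Real.rpow_pos_of_pos hq0 z
  have hr1 : r < 1 := Real.rpow_lt_one hq0.le hq1 hz
  set K : ℝ := q ^ (z * ((n:ℝ) - 1/2 - ν)) with hK_def
  have hK : 0 < K := Real.rpow_pos_of_pos hq0 _
  set T : ℝ → ℕ → ℝ := fun s l => ((ascPochhammer ℝ l).eval s / (Nat.factorial l : ℝ)) *
      q ^ (z * (s - ν + l)) / (1 - q ^ (s - ν + l)) with hT_def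
  set u : ℕ → ℝ := fun l => ((n + l).choose l : ℝ) * r ^ l * (K / δ) with hu_def
  have hu0 : ∀ l, 0 ≤ u l := fun l => by
    have := hδ; have := hK; positivity
  have hu_sum : Summable u := by
    have hbase : Summable (fun m : ℕ => (m : ℝ) ^ n * r ^ m) :=
      summable_pow_mul_geometric_of_norm_lt_one n
        (by rw [Real.norm_eq_abs, _root_.abs_of_pos hr0]; exact hr1)
    have hshift : Summable (fun l : ℕ => ((l + n : ℕ) : ℝ) ^ n * r ^ (l + n)) :=
      (summable_nat_add_iff n).2 hbase
    have hmul : Summable (fun l : ℕ => (r ^ n)⁻¹ * (((l + n : ℕ) : ℝ) ^ n * r ^ (l + n))) :=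
      hshift.mul_left _
    have hcs : Summable (fun l : ℕ => ((n + l).choose l : ℝ) * r ^ l) := by
      apply Summable.of_nonneg_of_le (fun l => by positivity) _ hmul
      intro l
      have h1 : ((n + l).choose l : ℝ) ≤ ((n + l : ℕ) : ℝ) ^ n := by
        have h2 : (n + l).choose l = (n + l).choose n := by
          rw [← Nat.choose_symm (Nat.le_add_right n l), Nat.add_sub_cancel_left]
        rw [h2]
        exact_mod_cast Nat.choose_le_pow (n+l) n
      calc ((n + l).choose l : ℝ) * r ^ l ≤ ((n + l : ℕ) : ℝ) ^ n * r ^ l :=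
            mul_le_mul_of_nonneg_right h1 (by positivity)
        _ = (r ^ n)⁻¹ * (((l + n : ℕ) : ℝ) ^ n * r ^ (l + n)) := by
            rw [add_comm l n, pow_add]
            field_simp
    exact hcs.mul_right _
  -- per-term bound
  have hTb : ∀ s : ℝ, |s - n| < 1/2 → ∀ l : ℕ, l ≠ l₀ → |T s l| ≤ u l := by
    intro s hs l hl
    have hs0 : (0:ℝ) < s := by
      have : (1:ℝ) ≤ n := by exact_mod_cast hn1
      rcases abs_cases (s - n) with ⟨h, _⟩ | ⟨h, _⟩ <;> [skip; skip] <;> nlinarith [hs]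
    have hnum : |(ascPochhammer ℝ l).eval s / (Nat.factorial l : ℝ)| ≤ ((n + l).choose l : ℝ) := by
      have h1 : (ascPochhammer ℝ l).eval s ≤ (ascPochhammer ℝ l).eval (((n+1 : ℕ) : ℝ)) := by
        apply ascPochhammer_eval_le_of_le' hs0.le
        push_cast
        rcases abs_cases (s - n) with ⟨h, _⟩ | ⟨h, _⟩ <;> linarith
      have h2 : (ascPochhammer ℝ l).eval (((n+1 : ℕ) : ℝ))
          = (Nat.factorial l : ℝ) * ((n + l).choose l : ℝ) := by
        rw [← ascPochhammer_eval_cast, ascPochhammer_nat_eq_ascFactorial,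
          Nat.ascFactorial_eq_factorial_mul_choose]
        push_cast; ring
      rw [_root_.abs_div, _root_.abs_of_nonneg (ascPochhammer_eval_nonneg' hs0.le),
        _root_.abs_of_pos (by positivity : (0:ℝ) < (Nat.factorial l : ℝ))]
      rw [div_le_iff₀ (by positivity : (0:ℝ) < (Nat.factorial l : ℝ))]
      calc (ascPochhammer ℝ l).eval s ≤ _ := h1
        _ = _ := h2
        _ = ((n + l).choose l : ℝ) * (Nat.factorial l : ℝ) := by ring
    have hq2 : q ^ (z * (s - ν + l)) = q ^ (z * (s - ν)) * r ^ l := by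
      rw [show z * (s - ν + l) = z * (s - ν) + z * l by ring, Real.rpow_add hq0,
        show z * (l:ℝ) = z * l by ring]
      congr 1
      rw [show z * (l:ℝ) = z * l by ring, Real.rpow_mul hq0.le, Real.rpow_natCast]
    have hq3 : q ^ (z * (s - ν)) ≤ K := by
      apply Real.rpow_le_rpow_of_exponent_ge hq0 hq1.le
      have : (n:ℝ) - 1/2 - ν ≤ s - ν := by
        rcases abs_cases (s - n) with ⟨h, _⟩ | ⟨h, _⟩ <;> linarith
      nlinarith [hz.le]
    have habs : 1/2 ≤ |s - ν + l| := by
      rcases lt_or_gt_of_ne hl with h | h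
      · have h1 : l + 1 + n ≤ ν := by omega
        have h2 : (l:ℝ) + 1 + n ≤ ν := by exact_mod_cast h1
        apply le_abs.mpr; right
        rcases abs_cases (s - n) with ⟨hh, _⟩ | ⟨hh, _⟩ <;> linarith
      · have h1 : ν + 1 ≤ n + l := by omega
        have h2 : (ν:ℝ) + 1 ≤ (n:ℝ) + l := by exact_mod_cast h1
        apply le_abs.mpr; left
        rcases abs_cases (s - n) with ⟨hh, _⟩ | ⟨hh, _⟩ <;> linarith
    have hden := hdenom _ habs
    have hTval : |T s l| = |(ascPochhammer ℝ l).eval s / (Nat.factorial l : ℝ)| *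
        q ^ (z * (s - ν + l)) / |1 - q ^ (s - ν + l)| := by
      rw [hT_def]
      rw [_root_.abs_div, _root_.abs_mul, _root_.abs_of_pos (Real.rpow_pos_of_pos hq0 _)]
    rw [hTval, hq2]
    calc |(ascPochhammer ℝ l).eval s / (Nat.factorial l : ℝ)| *
        (q ^ (z * (s - ν)) * r ^ l) / |1 - q ^ (s - ν + l)|
        ≤ ((n + l).choose l : ℝ) * (K * r ^ l) / δ := by
          apply div_le_div₀ (by positivity)
          · apply mul_le_mul hnum _ (by positivity) (by positivity)
            exact mul_le_mul_of_nonneg_right hq3 (by positivity)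
          · exact hδ
          · exact hden
      _ = u l := by rw [hu_def]; ring
  set M : ℝ := ∑' l, u l with hM_def
  have hM0 : 0 ≤ M := tsum_nonneg hu0
  have hsplit : ∀ s : ℝ, |s - n| < 1/2 →
      (∑' l, T s l) = (∑' l, (if l = l₀ then 0 else T s l)) + T s l₀ ∧
      |∑' l, (if l = l₀ then 0 else T s l)| ≤ M := by
    intro s hs
    have hgb : ∀ l : ℕ, ‖if l = l₀ then 0 else T s l‖ ≤ u l := by
      intro l
      by_cases h : l = l₀
      · simpa [h] using hu0 l
      · simpa [h, Real.norm_eq_abs] using hTb s hs l h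
    have hg_sum : Summable (fun l => if l = l₀ then 0 else T s l) :=
      Summable.of_norm_bounded hu_sum hgb
    have hsingle : Summable (fun l => if l = l₀ then T s l₀ else 0) := by
      apply summable_of_ne_finset_zero (s := {l₀})
      intro b hb
      simp only [Finset.mem_singleton] at hb
      simp [hb]
    constructor
    · have hTeq : (fun l => T s l) =
          (fun l => (if l = l₀ then 0 else T s l) + (if l = l₀ then T s l₀ else 0)) := by
        funext l
        by_cases h : l = l₀ <;> simp [h]
      rw [hTeq, Summable.tsum_add hg_sum hsingle, tsum_ite_eq]
    · simpa [Real.norm_eq_abs] using tsum_of_norm_bounded hu_sum.hasSum hgb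
  set E : ℝ → ℝ := fun s => Real.exp (s * Real.log (1 - q)) with hE_def
  have hev1 : ∀ᶠ s in nhdsWithin ((n:ℝ)) {s : ℝ | ∀ k : ℤ, s ≠ (k : ℝ)}, |s - (n:ℝ)| < 1/2 :=
    (eventually_abs_sub_lt (n:ℝ) (by norm_num : (0:ℝ) < 1/2)).filter_mono nhdsWithin_le_nhds
  have hev2 : ∀ᶠ s in nhdsWithin ((n:ℝ)) {s : ℝ | ∀ k : ℤ, s ≠ (k : ℝ)},
      ∀ k : ℤ, s ≠ (k : ℝ) := eventually_mem_nhdsWithin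
  set G : ℝ → ℝ := fun s => E s * ((ascPochhammer ℝ l₀).eval s / (Nat.factorial l₀ : ℝ)) *
      q ^ (z * (s - n)) * ((s - n) / (1 - q ^ (s - n))) with hG_def
  set H : ℝ → ℝ := fun s => (s - n) * (E s * ∑' l, (if l = l₀ then 0 else T s l)) with hH_def
  have heq : (fun s : ℝ => (s - n) * (E s * ∑' l, T s l)) =ᶠ[nhdsWithin ((n:ℝ))
      {s : ℝ | ∀ k : ℤ, s ≠ (k : ℝ)}] (fun s => G s + H s) := by
    filter_upwards [hev1] with s hs
    rw [(hsplit s hs).1]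
    have harg : s - (ν:ℝ) + (l₀:ℝ) = s - n := by rw [hl₀]; ring
    have hTl₀ : T s l₀ = ((ascPochhammer ℝ l₀).eval s / (Nat.factorial l₀ : ℝ)) *
        q ^ (z * (s - n)) / (1 - q ^ (s - n)) := by
      rw [hT_def]; simp only [harg]
    rw [hTl₀, hG_def, hH_def]
    ring
  have hE : Tendsto E (nhdsWithin ((n:ℝ)) {s : ℝ | ∀ k : ℤ, s ≠ (k : ℝ)}) (nhds (E n)) :=
    (((Real.continuous_exp.comp (continuous_id.mul continuous_const)).tendsto _)).mono_left
      nhdsWithin_le_nhds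
  have hpoly : Tendsto (fun s : ℝ => (ascPochhammer ℝ l₀).eval s / (Nat.factorial l₀ : ℝ))
      (nhdsWithin ((n:ℝ)) {s : ℝ | ∀ k : ℤ, s ≠ (k : ℝ)})
      (nhds ((ascPochhammer ℝ l₀).eval (n:ℝ) / (Nat.factorial l₀ : ℝ))) :=
    (((ascPochhammer ℝ l₀).continuous.tendsto _).div_const _).mono_left nhdsWithin_le_nhds
  have hqrw : ∀ x : ℝ, q ^ x = Real.exp (x * c) := by
    intro x; rw [Real.rpow_def_of_pos hq0, mul_comm]
  have hq1' : Tendsto (fun s : ℝ => q ^ (z * (s - n)))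
      (nhdsWithin ((n:ℝ)) {s : ℝ | ∀ k : ℤ, s ≠ (k : ℝ)}) (nhds 1) := by
    have hcont : Continuous (fun s : ℝ => Real.exp ((z * (s - n)) * c)) :=
      Real.continuous_exp.comp (((continuous_const.mul (continuous_id.sub
        continuous_const))).mul continuous_const)
    have := (hcont.tendsto ((n:ℝ))).mono_left (nhdsWithin_le_nhds
      (s := {s : ℝ | ∀ k : ℤ, s ≠ (k : ℝ)}))
    simp only [sub_self, mul_zero, zero_mul, Real.exp_zero] at this
    apply this.congr
    intro s
    rw [hqrw]
  have hmap : Tendsto (fun s : ℝ => s - n)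
      (nhdsWithin ((n:ℝ)) {s : ℝ | ∀ k : ℤ, s ≠ (k : ℝ)}) (nhdsWithin 0 {0}ᶜ) := by
    apply tendsto_nhdsWithin_of_tendsto_nhds_of_eventually_within
    · have hcont : Continuous (fun s : ℝ => s - (n:ℝ)) := continuous_id.sub continuous_const
      have := (hcont.tendsto ((n:ℝ))).mono_left
        (nhdsWithin_le_nhds (s := {s : ℝ | ∀ k : ℤ, s ≠ (k : ℝ)}))
      simpa using this
    · filter_upwards [hev2] with s h2
      have : s ≠ ((n:ℤ) : ℝ) := h2 (n : ℤ)
      simp only [Set.mem_compl_iff, Set.mem_singleton_iff]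
      push_cast at this
      exact sub_ne_zero.mpr this
  have hk : Tendsto (fun s : ℝ => (s - n) / (1 - q ^ (s - n)))
      (nhdsWithin ((n:ℝ)) {s : ℝ | ∀ k : ℤ, s ≠ (k : ℝ)}) (nhds (-c⁻¹)) := by
    have := (key_limit hc.ne).comp hmap
    apply this.congr
    intro s
    simp only [Function.comp_apply]
    rw [hqrw]
  have hG : Tendsto G (nhdsWithin ((n:ℝ)) {s : ℝ | ∀ k : ℤ, s ≠ (k : ℝ)})
      (nhds (E n * ((ascPochhammer ℝ l₀).eval (n:ℝ) / (Nat.factorial l₀ : ℝ)) * 1 * (-c⁻¹))) :=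
    ((hE.mul hpoly).mul hq1').mul hk
  have hH : Tendsto H (nhdsWithin ((n:ℝ)) {s : ℝ | ∀ k : ℤ, s ≠ (k : ℝ)}) (nhds 0) := by
    apply squeeze_zero_norm' (a := fun s => |s - (n:ℝ)| * (E s * M))
    · filter_upwards [hev1] with s hs
      rw [hH_def]
      simp only [Real.norm_eq_abs, _root_.abs_mul]
      rw [_root_.abs_of_pos (Real.exp_pos _ : (0:ℝ) < E s)]
      gcongr
      · exact (hsplit s hs).2
    · have hcont : Continuous (fun s : ℝ => |s - (n:ℝ)| * (E s * M)) :=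
        ((continuous_id.sub continuous_const).abs).mul
          ((Real.continuous_exp.comp (continuous_id.mul continuous_const)).mul continuous_const)
      have := (hcont.tendsto ((n:ℝ))).mono_left
        (nhdsWithin_le_nhds (s := {s : ℝ | ∀ k : ℤ, s ≠ (k : ℝ)}))
      simpa using this
  have hfinal := hG.add hH
  apply Tendsto.congr' heq.symm
  convert hfinal using 2
  have hEn : E (n:ℝ) = (1 - q) ^ n := by
    rw [hE_def]
    simp only []
    rw [mul_comm, ← Real.rpow_def_of_pos h1q, Real.rpow_natCast]
  have hevaln : (ascPochhammer ℝ l₀).eval ((n:ℕ) : ℝ)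
      = (Nat.factorial l₀ : ℝ) * (((ν - 1).choose (ν - n) : ℕ) : ℝ) := by
    rw [← ascPochhammer_eval_cast, ascPochhammer_nat_eq_ascFactorial,
      Nat.ascFactorial_eq_factorial_mul_choose']
    have : n + l₀ - 1 = ν - 1 := by omega
    rw [this, hl₀_def]
    push_cast; ring
  rw [hEn, hevaln]
  have hfac : (Nat.factorial l₀ : ℝ) ≠ 0 := by positivity
  field_simp [hc.ne]
  ring

lemma qpow_ofReal' (q x : ℝ) (h : 0 < q) : qpow q ((x : ℝ) : ℂ) = ((q ^ x : ℝ) : ℂ) := by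
  rw [qpow, Real.rpow_def_of_pos h, mul_comm, Complex.ofReal_exp, Complex.ofReal_mul]

lemma poch_ofReal (l : ℕ) (s : ℝ) :
    (ascPochhammer ℂ l).eval (s : ℂ) = (((ascPochhammer ℝ l).eval s : ℝ) : ℂ) := by
  rw [← ascPochhammer_map (algebraMap ℝ ℂ), Polynomial.eval_map, ← Complex.coe_algebraMap,
    Polynomial.eval₂_at_apply]

theorem stmt17 (q : ℝ) (hq0 : 0 < q) (hq1 : q < 1) (ν : ℕ) (hν : 0 < ν)
    (z : ℝ) (hz : 0 < z) (n : ℕ) (hn1 : 1 ≤ n) (hn2 : n ≤ ν) :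
    Tendsto (fun s : ℝ =>
        ((s : ℂ) - (n : ℂ)) * (Complex.exp ((s : ℂ) * Real.log (1 - q)) *
          ∑' l : ℕ, ((ascPochhammer ℂ l).eval (s : ℂ) / (Nat.factorial l : ℂ)) *
            qpow q ((z : ℂ) * ((s : ℂ) - (ν : ℂ) + (l : ℂ))) /
              (1 - qpow q ((s : ℂ) - (ν : ℂ) + (l : ℂ)))))
      (nhdsWithin ((n : ℝ)) {s : ℝ | ∀ k : ℤ, s ≠ (k : ℝ)})
      (nhds (-(Nat.choose (ν - 1) (ν - n) : ℂ) * (((1 - q) ^ n : ℝ) : ℂ) /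
        (Real.log q : ℂ))) := by
  have hmain := real_main q hq0 hq1 ν hν z hz n hn1 hn2
  have hcomp := (Complex.continuous_ofReal.tendsto _).comp hmain
  have hval : (((-(((ν - 1).choose (ν - n) : ℕ) : ℝ) * (1 - q) ^ n / Real.log q : ℝ)) : ℂ)
      = -(Nat.choose (ν - 1) (ν - n) : ℂ) * (((1 - q) ^ n : ℝ) : ℂ) / (Real.log q : ℂ) := by
    push_cast; ring
  rw [← hval]
  apply hcomp.congr
  intro s
  simp only [Function.comp_apply]
  have hterm : ∀ l : ℕ,
      ((ascPochhammer ℂ l).eval (s : ℂ) / (Nat.factorial l : ℂ)) *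
        qpow q ((z : ℂ) * ((s : ℂ) - (ν : ℂ) + (l : ℂ))) /
          (1 - qpow q ((s : ℂ) - (ν : ℂ) + (l : ℂ)))
      = ((((ascPochhammer ℝ l).eval s / (Nat.factorial l : ℝ)) *
            q ^ (z * (s - ν + l)) / (1 - q ^ (s - ν + l)) : ℝ) : ℂ) := by
    intro l
    have h1 : ((z : ℂ) * ((s : ℂ) - (ν : ℂ) + (l : ℂ))) = (((z * (s - ν + l) : ℝ)) : ℂ) := by
      push_cast; ring
    have h2 : ((s : ℂ) - (ν : ℂ) + (l : ℂ)) = (((s - ν + l : ℝ)) : ℂ) := by push_cast; ring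
    rw [h1, h2, qpow_ofReal' _ _ hq0, qpow_ofReal' _ _ hq0, poch_ofReal]
    push_cast
    ring
  rw [tsum_congr hterm, ← Complex.ofReal_tsum]
  rw [Complex.ofReal_mul, Complex.ofReal_mul, Complex.ofReal_sub, Complex.ofReal_exp,
    Complex.ofReal_mul]
  norm_cast
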